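/- Let $(M = G/H, \rho)$ be a geodesic orbit Riemannian space with reductive decomposition $\mathfrak{g} = \mathfrak{h} \oplus \mathfrak{m}$ and invariant inner product $(\cdot,\cdot)$ on $\mathfrak{m}$, and let $\mathfrak{m} = \mathfrak{p} \oplus \mathfrak{q}$ be a $(\cdot,\cdot)$-orthogonal $\operatorname{Ad}(H)$-invariant decomposition. Then for every $X \in \mathfrak{p}$ the operator $Y \mapsto ([X,Y]_{\mathfrak{m}})_{\mathfrak{q}}$ on $\mathfrak{q}$ is skew-symmetric with respect to $(\cdot,\cdot)$, and $U(\mathfrak{q},\mathfrak{q}) \subseteq \mathfrak{q}$. -/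
import Mathlib


/-- Let `𝔤 = 𝔥 ⊕ 𝔪` be a reductive decomposition of a geodesic orbit space (the
GO-property holds for the `ad 𝔥`-invariant inner product `(·,·)` on `𝔪`), and let
`𝔪 = 𝔭 ⊕ 𝔮` be a `(·,·)`-orthogonal `Ad(H)`-invariant decomposition. Then for every `X ∈ 𝔭`
the operator `Y ↦ ([X,Y]_𝔪)_𝔮` on `𝔮` is `(·,·)`-skew-symmetric, and `U(𝔮,𝔮) ⊆ 𝔮`. -/
theorem go_space_skew_symmetry_on_orthogonal_summand
    (L : Type*) [LieRing L] [LieAlgebra ℝ L] [FiniteDimensional ℝ L]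
    (h : LieSubalgebra ℝ L) (m : Submodule ℝ L)
    (hcompl : IsCompl h.toSubmodule m)
    (hadm : ∀ Z ∈ h, ∀ x ∈ m, ⁅Z, x⁆ ∈ m)
    (Φ : LinearMap.BilinForm ℝ L)
    (hΦsymm : ∀ x y : L, Φ x y = Φ y x)
    (hΦpos : ∀ x ∈ m, x ≠ 0 → 0 < Φ x x)
    (hΦinv : ∀ Z ∈ h, ∀ x ∈ m, ∀ y ∈ m, Φ ⁅Z, x⁆ y + Φ x ⁅Z, y⁆ = 0)
    (πm : L →ₗ[ℝ] L)
    (hπmem : ∀ x : L, πm x ∈ m) (hπid : ∀ x ∈ m, πm x = x) (hπh : ∀ x ∈ h, πm x = 0)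
    -- the GO-property (Kowalski–Vanhecke criterion)
    (hGO : ∀ X ∈ m, ∃ Z ∈ h, ∀ Y ∈ m, Φ (πm ⁅X + Z, Y⁆) X = 0)
    -- the orthogonal invariant decomposition `𝔪 = 𝔭 ⊕ 𝔮`
    (p q : Submodule ℝ L) (hpm : p ≤ m) (hqm : q ≤ m)
    (hpq : p ⊔ q = m ∧ p ⊓ q = ⊥)
    (horth : ∀ x ∈ p, ∀ y ∈ q, Φ x y = 0)
    (hpinv : ∀ Z ∈ h, ∀ x ∈ p, ⁅Z, x⁆ ∈ p)
    (hqinv : ∀ Z ∈ h, ∀ y ∈ q, ⁅Z, y⁆ ∈ q)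
    -- the bilinear symmetric map `U`
    (U : L → L → L)
    (hU : ∀ X ∈ m, ∀ Y ∈ m, U X Y ∈ m ∧
      ∀ Z ∈ m, 2 * Φ (U X Y) Z = Φ (πm ⁅Z, X⁆) Y + Φ X (πm ⁅Z, Y⁆)) :
    (∀ X ∈ p, ∀ Y ∈ q, ∀ Y' ∈ q, Φ (πm ⁅X, Y⁆) Y' = - Φ (πm ⁅X, Y'⁆) Y) ∧
      (∀ X ∈ q, ∀ Y ∈ q, U X Y ∈ q) := by
  -- Core fact: for `X ∈ p`, `Y ∈ q` we have `Φ (πm ⁅X,Y⁆) Y = 0`.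
  have core : ∀ X ∈ p, ∀ Y ∈ q, Φ (πm ⁅X, Y⁆) Y = 0 := by
    intro X hX Y hY
    obtain ⟨Z, hZ, hprop⟩ := hGO Y (hqm hY)
    have h1 := hprop X (hpm hX)
    have hZX : ⁅Z, X⁆ ∈ p := hpinv Z hZ X hX
    have hsplit : πm ⁅Y + Z, X⁆ = πm ⁅Y, X⁆ + ⁅Z, X⁆ := by
      rw [add_lie, map_add, hπid _ (hpm hZX)]
    rw [hsplit, map_add, LinearMap.add_apply, horth _ hZX Y hY, add_zero] at h1
    have : πm ⁅X, Y⁆ = - πm ⁅Y, X⁆ := by rw [← lie_skew, map_neg]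
    rw [this, map_neg, LinearMap.neg_apply, h1, neg_zero]
  have skew : ∀ X ∈ p, ∀ Y ∈ q, ∀ Y' ∈ q, Φ (πm ⁅X, Y⁆) Y' = - Φ (πm ⁅X, Y'⁆) Y := by
    intro X hX Y hY Y' hY'
    have hpol := core X hX (Y + Y') (add_mem hY hY')
    have hexp : πm ⁅X, Y + Y'⁆ = πm ⁅X, Y⁆ + πm ⁅X, Y'⁆ := by rw [lie_add, map_add]
    simp only [hexp, map_add, LinearMap.add_apply] at hpol
    have c1 := core X hX Y hY
    have c2 := core X hX Y' hY'
    linarith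
  refine ⟨skew, ?_⟩
  intro X hX Y hY
  obtain ⟨hUm, hUeq⟩ := hU X (hqm hX) Y (hqm hY)
  -- `U X Y` is orthogonal to `p`.
  have horthU : ∀ W ∈ p, Φ (U X Y) W = 0 := by
    intro W hW
    have h2 := hUeq W (hpm hW)
    have hs := skew W hW X hX Y hY
    have hsym : Φ X (πm ⁅W, Y⁆) = Φ (πm ⁅W, Y⁆) X := hΦsymm _ _
    have : 2 * Φ (U X Y) W = 0 := by rw [h2, hsym]; linarith
    have h4 := hΦsymm (U X Y) W
    linarith
  -- decompose `U X Y = P + Q` with `P ∈ p`, `Q ∈ q`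
  have hmem : U X Y ∈ p ⊔ q := by rw [hpq.1]; exact hUm
  obtain ⟨P, hP, Q, hQ, hPQ⟩ := Submodule.mem_sup.mp hmem
  have hP0 : P = 0 := by
    by_contra hne
    have hpos := hΦpos P (hpm hP) hne
    have h5 := horthU P hP
    rw [← hPQ, map_add, LinearMap.add_apply] at h5
    have h6 : Φ Q P = 0 := by rw [hΦsymm]; exact horth P hP Q hQ
    rw [h6, add_zero] at h5
    linarith
  rw [← hPQ, hP0, zero_add]
  exact hQ
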